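/- Let F be a finite set of cardinality N and let P_θ, θ∈F, be probability measures on a measurable space 𝒳, all dominated by a σ-finite measure μ with densities p_θ. Then for every convex function f:[0,∞)→ℝ with f(1)=0 and every probability measure Q on 𝒳, one has Σ_{θ∈F} D_f(P_θ||Q) ≥ f(N(1−r̄)) + (N−1)·f(N r̄/(N−1)), where r̄ := inf_T (1/N) Σ_{θ∈F} P_θ{T ≠ θ} is the uniform-prior Bayes testing risk (infimum over all measurable maps T: 𝒳 → F). -/

import Mathlib

open MeasureTheory Real

/-- The `f`-divergence `D_f(P‖Q) = ∫ f(dP/dQ) dQ` (real-valued; meaningful when `P ≪ Q`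
and the integrand is integrable, in which case it agrees with the usual definition;
otherwise the usual `D_f` is `+∞` and the lower bound is trivially true). -/
noncomputable def fDivR {X : Type*} [MeasurableSpace X] (f : ℝ → ℝ) (P Q : Measure X) : ℝ :=
  ∫ x, f ((P.rnDeriv Q x).toReal) ∂Q

/-- The uniform-prior Bayes testing risk `r̄ = inf_T (1/N) Σ_θ P_θ {T ≠ θ}`, the infimum
being over all measurable tests `T : X → F`. -/
noncomputable def bayesRisk {X F : Type*} [MeasurableSpace X] [Fintype F]
    (P : F → Measure X) : ℝ :=
  ⨅ T : {T : X → F // ∀ θ, MeasurableSet {x | T x = θ}},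
    (Fintype.card F : ℝ)⁻¹ * ∑ θ, (P θ {x | T.1 x ≠ θ}).toReal

/-- A convex function on `[0,∞)` has a supporting line at any interior point. -/
lemma aux_support_line {f : ℝ → ℝ} (hf : ConvexOn ℝ (Set.Ici 0) f) {m : ℝ} (hm : 0 < m) :
    ∃ c : ℝ, ∀ t ∈ Set.Ici (0:ℝ), f m + c * (t - m) ≤ f t := by
  set S : Set ℝ := (fun y => (f y - f m) / (y - m)) '' Set.Ioi m with hS
  have hne : S.Nonempty := ⟨_, ⟨m + 1, by simp [Set.mem_Ioi], rfl⟩⟩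
  have hbdd : BddBelow S := by
    refine ⟨(f m - f (m/2)) / (m - m/2), ?_⟩
    rintro z ⟨y, hy, rfl⟩
    exact hf.slope_mono_adjacent (Set.mem_Ici.mpr (by linarith))
      (Set.mem_Ici.mpr (by have := (Set.mem_Ioi.mp hy); linarith)) (by linarith)
      (Set.mem_Ioi.mp hy)
  refine ⟨sInf S, fun t ht => ?_⟩
  have ht0 : (0:ℝ) ≤ t := ht
  rcases lt_trichotomy t m with h | h | h
  · have h1 : (f m - f t) / (m - t) ≤ sInf S := by
      refine le_csInf hne ?_
      rintro z ⟨y, hy, rfl⟩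
      exact hf.slope_mono_adjacent ht (Set.mem_Ici.mpr (by have := Set.mem_Ioi.mp hy; linarith))
        h (Set.mem_Ioi.mp hy)
    have h2 : f m - f t ≤ sInf S * (m - t) := (div_le_iff₀ (by linarith)).mp h1
    have h3 : sInf S * (t - m) = -(sInf S * (m - t)) := by ring
    linarith
  · simp [h]
  · have h1 : sInf S ≤ (f t - f m) / (t - m) := csInf_le hbdd ⟨t, Set.mem_Ioi.mpr h, rfl⟩
    have h2 : sInf S * (t - m) ≤ f t - f m := by
      have := (le_div_iff₀ (by linarith : (0:ℝ) < t - m)).mp h1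
      linarith
    linarith

/-- Conditional Jensen inequality on a set, for a convex function on `[0,∞)`. -/
lemma aux_jensen_set {X : Type*} [MeasurableSpace X] {ν : Measure X}
    {f : ℝ → ℝ} (hf : ConvexOn ℝ (Set.Ici 0) f)
    {g : X → ℝ} (hg0 : ∀ x, 0 ≤ g x)
    {C : Set X} (hC : MeasurableSet C) (hνC : ν C ≠ 0) (hνC' : ν C ≠ ⊤)
    (hgi : IntegrableOn g C ν) (hfi : IntegrableOn (fun x => f (g x)) C ν) :
    (ν C).toReal * f ((∫ x in C, g x ∂ν) / (ν C).toReal) ≤ ∫ x in C, f (g x) ∂ν := by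
  have hw : 0 < (ν C).toReal := ENNReal.toReal_pos hνC hνC'
  haveI : IsFiniteMeasure (ν.restrict C) :=
    ⟨by rwa [Measure.restrict_apply_univ, lt_top_iff_ne_top]⟩
  set w : ℝ := (ν C).toReal with hwdef
  set I : ℝ := ∫ x in C, g x ∂ν with hI
  have hI0 : 0 ≤ I := setIntegral_nonneg hC (fun x _ => hg0 x)
  set m : ℝ := I / w with hm
  have hm0 : 0 ≤ m := div_nonneg hI0 hw.le
  have hIw : I = m * w := by rw [hm]; exact (div_mul_cancel₀ I hw.ne').symm
  rcases eq_or_lt_of_le hm0 with hmz | hmpos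
  · -- m = 0, so I = 0, so g = 0 a.e. on C
    have hI0' : I = 0 := by
      have : I = m * w := hIw
      rw [← hmz] at this; simpa using this
    have hg_ae : g =ᵐ[ν.restrict C] 0 := by
      rw [← integral_eq_zero_iff_of_nonneg_ae (ae_of_all _ hg0) hgi]
      exact hI0'
    have hfg : (fun x => f (g x)) =ᵐ[ν.restrict C] (fun _ => f 0) := by
      filter_upwards [hg_ae] with x hx
      simp [hx]
    rw [integral_congr_ae hfg, setIntegral_const]
    rw [← hmz]
    simp [smul_eq_mul, hwdef, Measure.real]
  · obtain ⟨c, hc⟩ := aux_support_line hf hmpos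
    have hle : ∀ x, f m + c * (g x - m) ≤ f (g x) := fun x => hc (g x) (hg0 x)
    have hint : Integrable (fun x => f m + c * (g x - m)) (ν.restrict C) := by
      exact (integrable_const _).add (((hgi.sub (integrable_const m)).const_mul c))
    have hmono : ∫ x in C, (f m + c * (g x - m)) ∂ν ≤ ∫ x in C, f (g x) ∂ν :=
      integral_mono hint hfi (fun x => hle x)
    have h1 : Integrable (fun x => c * (g x - m)) (ν.restrict C) := by
      exact (hgi.sub (integrable_const m)).const_mul c
    have h2 : Integrable (fun x => g x - m) (ν.restrict C) := by
      exact hgi.sub (integrable_const m)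
    have hcomp : ∫ x in C, (f m + c * (g x - m)) ∂ν = w * f m := by
      rw [integral_add (integrable_const _) h1]
      rw [integral_const_mul, integral_sub hgi (integrable_const _), setIntegral_const,
        setIntegral_const]
      simp only [smul_eq_mul, Measure.real, ← hwdef, ← hI]
      rw [hIw]; ring
    calc w * f (I / w) = w * f m := by rw [← hm]
    _ = ∫ x in C, (f m + c * (g x - m)) ∂ν := hcomp.symm
    _ ≤ _ := hmono

/-- Theorem 1, uniform prior: for every convex `f` with `f 1 = 0` and every
probability measure `Q`, `Σ_θ D_f(P_θ‖Q) ≥ f(N(1-r̄)) + (N-1) f(N r̄/(N-1))`. -/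
theorem statement1 {X F : Type*} [MeasurableSpace X] [Fintype F] [Nonempty F]
    (μ : Measure X) [SigmaFinite μ]
    (P : F → Measure X) (hPdom : ∀ θ, P θ ≪ μ) (hPprob : ∀ θ, IsProbabilityMeasure (P θ))
    (f : ℝ → ℝ) (hf : ConvexOn ℝ (Set.Ici 0) f) (hf1 : f 1 = 0)
    (Q : Measure X) [IsProbabilityMeasure Q]
    (hAC : ∀ θ, P θ ≪ Q)
    (hInt : ∀ θ, Integrable (fun x => f ((P θ).rnDeriv Q x).toReal) Q)
    (N : ℝ) (hN : N = Fintype.card F) :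
    f (N * (1 - bayesRisk P)) + (N - 1) * f (N * bayesRisk P / (N - 1)) ≤
      ∑ θ, fDivR f (P θ) Q := by
  classical
  have hcardpos : 0 < Fintype.card F := Fintype.card_pos
  -- densities
  set ρ : F → X → ℝ := fun θ x => ((P θ).rnDeriv Q x).toReal with hρdef
  have hρmeas : ∀ θ, Measurable (ρ θ) := fun θ =>
    (Measure.measurable_rnDeriv _ _).ennreal_toReal
  have hρ0 : ∀ θ x, 0 ≤ ρ θ x := fun θ x => ENNReal.toReal_nonneg
  have hρint : ∀ θ, Integrable (ρ θ) Q := by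
    intro θ; haveI := hPprob θ; exact Measure.integrable_toReal_rnDeriv
  have hρset : ∀ θ (s : Set X), ∫ x in s, ρ θ x ∂Q = ((P θ) s).toReal := by
    intro θ s; haveI := hPprob θ; exact Measure.setIntegral_toReal_rnDeriv (hAC θ) s
  have hfρint : ∀ θ, Integrable (fun x => f (ρ θ x)) Q := hInt
  have hDiv : ∀ θ, fDivR f (P θ) Q = ∫ x, f (ρ θ x) ∂Q := fun θ => rfl
  -- max of densities
  have hune : (Finset.univ : Finset F).Nonempty := Finset.univ_nonempty
  set M : X → ℝ := fun x => Finset.univ.sup' hune (fun θ => ρ θ x) with hMdef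
  have hMmeas : Measurable M := by
    have h1 : Measurable (Finset.univ.sup' hune ρ) :=
      Finset.measurable_sup' hune (fun θ _ => hρmeas θ)
    have h2 : (Finset.univ.sup' hune ρ) = M := by
      funext x; rw [Finset.sup'_apply]
    rwa [h2] at h1
  have hρleM : ∀ θ x, ρ θ x ≤ M x := fun θ x =>
    Finset.le_sup' (fun θ => ρ θ x) (Finset.mem_univ θ)
  have hM0 : ∀ x, 0 ≤ M x := fun x =>
    le_trans (hρ0 (Classical.arbitrary F) x) (hρleM _ x)
  have hMleSum : ∀ x, M x ≤ ∑ θ, ρ θ x := fun x =>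
    Finset.sup'_le _ _ (fun θ _ =>
      Finset.single_le_sum (fun θ' _ => hρ0 θ' x) (Finset.mem_univ θ))
  have hMint : Integrable M Q := by
    refine Integrable.mono' (g := fun x => ∑ θ, ρ θ x)
      (integrable_finset_sum Finset.univ (fun θ _ => hρint θ))
      hMmeas.aestronglyMeasurable ?_
    refine ae_of_all _ (fun x => ?_)
    rw [Real.norm_eq_abs, abs_of_nonneg (hM0 x)]
    exact hMleSum x
  -- maximum likelihood test
  set e : F ≃ Fin (Fintype.card F) := Fintype.equivFin F with he
  set Sel : X → Finset (Fin (Fintype.card F)) :=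
    fun x => Finset.univ.filter (fun i => M x ≤ ρ (e.symm i) x) with hSeldef
  have hSelmem : ∀ x i, i ∈ Sel x ↔ M x ≤ ρ (e.symm i) x := by
    intro x i; simp [hSeldef]
  have hSelne : ∀ x, (Sel x).Nonempty := by
    intro x
    obtain ⟨θ, -, hθ⟩ := Finset.exists_mem_eq_sup' hune (fun θ' => ρ θ' x)
    exact ⟨e θ, (hSelmem x (e θ)).mpr (by rw [Equiv.symm_apply_apply]; exact le_of_eq hθ)⟩
  set T : X → F := fun x => e.symm ((Sel x).min' (hSelne x)) with hTdef
  have hTmax : ∀ x, ρ (T x) x = M x := by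
    intro x
    have h1 := (hSelmem x _).mp (Finset.min'_mem (Sel x) (hSelne x))
    exact le_antisymm (hρleM _ x) h1
  -- fibers of the test are measurable
  have hfiber : ∀ θ, {x | T x = θ} =
      {x | M x ≤ ρ θ x} ∩ ⋂ i, {x | M x ≤ ρ (e.symm i) x → e θ ≤ i} := by
    intro θ
    ext x
    simp only [Set.mem_setOf_eq, Set.mem_inter_iff, Set.mem_iInter]
    constructor
    · intro hx
      have hmin : (Sel x).min' (hSelne x) = e θ := by
        have : e (T x) = e θ := congrArg e hx
        rwa [hTdef, Equiv.apply_symm_apply] at this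
      refine ⟨?_, ?_⟩
      · have h1 := (hSelmem x _).mp (Finset.min'_mem (Sel x) (hSelne x))
        rw [hmin, Equiv.symm_apply_apply] at h1
        exact h1
      · intro i hi
        have := Finset.min'_le (Sel x) i ((hSelmem x i).mpr hi)
        rwa [hmin] at this
    · rintro ⟨h1, h2⟩
      have hθSel : e θ ∈ Sel x := (hSelmem x _).mpr (by rwa [Equiv.symm_apply_apply])
      have hminle : (Sel x).min' (hSelne x) ≤ e θ := Finset.min'_le _ _ hθSel
      have hlemin : e θ ≤ (Sel x).min' (hSelne x) :=
        h2 _ ((hSelmem x _).mp (Finset.min'_mem (Sel x) (hSelne x)))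
      have hmin : (Sel x).min' (hSelne x) = e θ := le_antisymm hminle hlemin
      rw [hTdef]
      simp only [hmin, Equiv.symm_apply_apply]
  have hTmeasur : ∀ θ, MeasurableSet {x | T x = θ} := by
    intro θ
    rw [hfiber θ]
    refine (measurableSet_le hMmeas (hρmeas θ)).inter (MeasurableSet.iInter fun i => ?_)
    by_cases h : e θ ≤ i
    · have : {x | M x ≤ ρ (e.symm i) x → e θ ≤ i} = Set.univ := by
        ext x; simp [h]
      rw [this]; exact MeasurableSet.univ
    · have : {x | M x ≤ ρ (e.symm i) x → e θ ≤ i} = {x | ρ (e.symm i) x < M x} := by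
        ext x; simp [h, not_le]
      rw [this]; exact measurableSet_lt (hρmeas _) hMmeas
  -- partition generalities
  have hpartM : ∀ (T' : X → F), (∀ θ, MeasurableSet {x | T' x = θ}) →
      ∑ θ, ∫ x in {x | T' x = θ}, M x ∂Q = ∫ x, M x ∂Q := by
    intro T' hT'
    have hdis : Pairwise (Function.onFun Disjoint fun θ => {x | T' x = θ}) := by
      intro θ θ' hθθ'
      simp only [Function.onFun]
      rw [Set.disjoint_left]
      rintro x hx hx'
      exact hθθ' ((hx : T' x = θ).symm.trans hx')
    have huni : ⋃ θ, {x | T' x = θ} = Set.univ := by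
      ext x; simp
    rw [← integral_iUnion_fintype hT' hdis (fun θ => hMint.integrableOn), huni,
      setIntegral_univ]
  -- the sum of correct-decision probabilities for the ML test equals ∫ M
  set A : F → Set X := fun θ => {x | T x = θ} with hAdef
  have hAmeas : ∀ θ, MeasurableSet (A θ) := hTmeasur
  set s : ℝ := ∑ θ, (P θ (A θ)).toReal with hsdef
  have hsM : s = ∫ x, M x ∂Q := by
    rw [hsdef, ← hpartM T hTmeasur]
    refine Finset.sum_congr rfl (fun θ _ => ?_)
    rw [← hρset θ (A θ)]
    refine setIntegral_congr_fun (hAmeas θ) (fun x hx => ?_)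
    have hx' : T x = θ := hx
    rw [← hx']
    exact hTmax x
  -- any other test does no better
  have hbest : ∀ (T' : X → F), (∀ θ, MeasurableSet {x | T' x = θ}) →
      ∑ θ, (P θ {x | T' x = θ}).toReal ≤ s := by
    intro T' hT'
    rw [hsM, ← hpartM T' hT']
    refine Finset.sum_le_sum (fun θ _ => ?_)
    rw [← hρset θ _]
    exact setIntegral_mono_on ((hρint θ).integrableOn) (hMint.integrableOn) (hT' θ)
      (fun x _ => hρleM θ x)
  -- complement formula
  have hcompl : ∀ θ (S : Set X), MeasurableSet S →
      (P θ Sᶜ).toReal = 1 - (P θ S).toReal := by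
    intro θ S hS
    haveI := hPprob θ
    have h1 : P θ S + P θ Sᶜ = 1 := by
      rw [measure_add_measure_compl hS, measure_univ]
    have h2 : (P θ S).toReal + (P θ Sᶜ).toReal = 1 := by
      rw [← ENNReal.toReal_add (measure_ne_top _ _) (measure_ne_top _ _), h1,
        ENNReal.toReal_one]
    linarith
  have hQcompl : ∀ (S : Set X), MeasurableSet S → (Q Sᶜ).toReal = 1 - (Q S).toReal := by
    intro S hS
    have h1 : Q S + Q Sᶜ = 1 := by
      rw [measure_add_measure_compl hS, measure_univ]
    have h2 : (Q S).toReal + (Q Sᶜ).toReal = 1 := by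
      rw [← ENNReal.toReal_add (measure_ne_top _ _) (measure_ne_top _ _), h1,
        ENNReal.toReal_one]
    linarith
  -- identify the Bayes risk
  have hrisk : ∀ (T' : X → F) (hT' : ∀ θ, MeasurableSet {x | T' x = θ}),
      ∑ θ, (P θ {x | T' x ≠ θ}).toReal =
        (Fintype.card F : ℝ) - ∑ θ, (P θ {x | T' x = θ}).toReal := by
    intro T' hT'
    have h1 : ∀ θ, (P θ {x | T' x ≠ θ}).toReal = 1 - (P θ {x | T' x = θ}).toReal := by
      intro θ
      have : {x | T' x ≠ θ} = {x | T' x = θ}ᶜ := rfl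
      rw [this, hcompl θ _ (hT' θ)]
    rw [Finset.sum_congr rfl (fun θ _ => h1 θ), Finset.sum_sub_distrib]
    simp [Finset.card_univ]
  haveI : Nonempty {T : X → F // ∀ θ, MeasurableSet {x | T x = θ}} := ⟨⟨T, hTmeasur⟩⟩
  have hBval : bayesRisk P = (Fintype.card F : ℝ)⁻¹ * ((Fintype.card F : ℝ) - s) := by
    apply le_antisymm
    · have hbdd : BddBelow (Set.range fun (T' : {T : X → F // ∀ θ, MeasurableSet {x | T x = θ}}) =>
          (Fintype.card F : ℝ)⁻¹ * ∑ θ, (P θ {x | T'.1 x ≠ θ}).toReal) := by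
        refine ⟨0, ?_⟩
        rintro y ⟨T', rfl⟩
        have h1 : (0:ℝ) ≤ ∑ θ, (P θ {x | T'.1 x ≠ θ}).toReal :=
          Finset.sum_nonneg (fun θ _ => ENNReal.toReal_nonneg)
        positivity
      have h2 := ciInf_le hbdd (⟨T, hTmeasur⟩ : {T : X → F // ∀ θ, MeasurableSet {x | T x = θ}})
      calc bayesRisk P ≤ (Fintype.card F : ℝ)⁻¹ * ∑ θ, (P θ {x | T x ≠ θ}).toReal := h2
      _ = (Fintype.card F : ℝ)⁻¹ * ((Fintype.card F : ℝ) - s) := by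
          rw [hrisk T hTmeasur]
    · refine le_ciInf (fun T' => ?_)
      rw [hrisk T'.1 T'.2]
      have h3 := hbest T'.1 T'.2
      have h4 : (0:ℝ) < (Fintype.card F : ℝ) := by exact_mod_cast hcardpos
      have h5 : (0:ℝ) ≤ (Fintype.card F : ℝ)⁻¹ := by positivity
      apply mul_le_mul_of_nonneg_left _ h5
      linarith
  -- value bounds for s
  have hs0 : 0 ≤ s := Finset.sum_nonneg (fun θ _ => ENNReal.toReal_nonneg)
  have hsn : s ≤ (Fintype.card F : ℝ) := by
    have : ∀ θ, (P θ (A θ)).toReal ≤ 1 := by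
      intro θ; haveI := hPprob θ
      have h1 : (P θ (A θ)).toReal ≤ (P θ Set.univ).toReal :=
        ENNReal.toReal_mono (measure_ne_top _ _) (measure_mono (Set.subset_univ _))
      simpa using h1
    calc s ≤ ∑ _θ : F, (1:ℝ) := Finset.sum_le_sum (fun θ _ => this θ)
    _ = (Fintype.card F : ℝ) := by simp [Finset.card_univ]
  -- the two key identities
  have hNpos : (0:ℝ) < N := by rw [hN]; exact_mod_cast hcardpos
  have hkey1 : N * (1 - bayesRisk P) = s := by
    rw [hBval, hN]; field_simp; ring
  have hkey2 : N * bayesRisk P = N - s := by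
    rw [hBval, hN]; field_simp
  -- nonnegativity of each divergence
  have hDf0 : ∀ θ, 0 ≤ fDivR f (P θ) Q := by
    intro θ
    haveI := hPprob θ
    have h := aux_jensen_set (ν := Q) hf (hρ0 θ) MeasurableSet.univ
      (by simp) (by simp) ((hρint θ).integrableOn) ((hfρint θ).integrableOn)
    have h2 : ∫ x in Set.univ, ρ θ x ∂Q = 1 := by
      rw [hρset θ Set.univ]; simp
    rw [h2, setIntegral_univ, measure_univ] at h
    rw [hDiv θ]
    simpa [hf1] using h
  by_cases hcard1 : Fintype.card F = 1
  · -- the degenerate one-point case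
    haveI hsub : Subsingleton F := Fintype.card_le_one_iff_subsingleton.mp (le_of_eq hcard1)
    have hs1 : s = 1 := by
      have hAuniv : ∀ θ, A θ = Set.univ := by
        intro θ; ext x
        simp only [hAdef, Set.mem_setOf_eq, Set.mem_univ, iff_true]
        exact Subsingleton.elim (T x) θ
      have hone : ∀ θ, (P θ (A θ)).toReal = 1 := by
        intro θ; haveI := hPprob θ; rw [hAuniv θ]; simp
      rw [hsdef, Finset.sum_congr rfl (fun θ _ => hone θ)]
      simp [Finset.card_univ, hcard1]
    have hN1 : N = 1 := by rw [hN, hcard1]; norm_num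
    have hB0 : bayesRisk P = 0 := by rw [hBval, hcard1, hs1]; norm_num
    rw [hN1, hB0]
    norm_num [hf1]
    exact Finset.sum_nonneg (fun θ _ => hDf0 θ)
  · -- main case : at least two hypotheses
    have hcard2 : 2 ≤ Fintype.card F := by omega
    have hn1pos : (0:ℝ) < (Fintype.card F : ℝ) - 1 := by
      have h2 : (2:ℝ) ≤ (Fintype.card F : ℝ) := by exact_mod_cast hcard2
      linarith
    -- per-cell Jensen
    have hcell : ∀ θ (C : Set X), MeasurableSet C →
        (Q C).toReal * f (if Q C = 0 then 0 else (P θ C).toReal / (Q C).toReal)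
          ≤ ∫ x in C, f (ρ θ x) ∂Q := by
      intro θ C hC
      by_cases h0 : Q C = 0
      · have hres : Q.restrict C = 0 := Measure.restrict_eq_zero.mpr h0
        rw [if_pos h0, h0]
        simp [hres]
      · rw [if_neg h0]
        have h := aux_jensen_set (ν := Q) hf (hρ0 θ) hC h0 (measure_ne_top _ _)
          ((hρint θ).integrableOn) ((hfρint θ).integrableOn)
        rwa [hρset θ C] at h
    set xv : F → ℝ := fun θ =>
      if Q (A θ) = 0 then 0 else (P θ (A θ)).toReal / (Q (A θ)).toReal with hxvdef
    set xv' : F → ℝ := fun θ =>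
      if Q (A θ)ᶜ = 0 then 0 else (P θ (A θ)ᶜ).toReal / (Q (A θ)ᶜ).toReal with hxv'def
    have hxv0 : ∀ θ, xv θ ∈ Set.Ici (0:ℝ) := by
      intro θ
      rw [hxvdef]; dsimp only
      split
      · exact Set.mem_Ici.mpr le_rfl
      · exact Set.mem_Ici.mpr (div_nonneg ENNReal.toReal_nonneg ENNReal.toReal_nonneg)
    have hxv'0 : ∀ θ, xv' θ ∈ Set.Ici (0:ℝ) := by
      intro θ
      rw [hxv'def]; dsimp only
      split
      · exact Set.mem_Ici.mpr le_rfl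
      · exact Set.mem_Ici.mpr (div_nonneg ENNReal.toReal_nonneg ENNReal.toReal_nonneg)
    have haxv : ∀ θ, (Q (A θ)).toReal * xv θ = (P θ (A θ)).toReal := by
      intro θ
      by_cases h0 : Q (A θ) = 0
      · have hb0 : P θ (A θ) = 0 := (hAC θ) h0
        rw [hxvdef]; dsimp only
        rw [if_pos h0, h0, hb0]
        simp
      · have ha : (Q (A θ)).toReal ≠ 0 :=
          ENNReal.toReal_ne_zero.mpr ⟨h0, measure_ne_top _ _⟩
        rw [hxvdef]; dsimp only
        rw [if_neg h0]
        field_simp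
    have haxv' : ∀ θ, (Q (A θ)ᶜ).toReal * xv' θ = (P θ (A θ)ᶜ).toReal := by
      intro θ
      by_cases h0 : Q (A θ)ᶜ = 0
      · have hb0 : P θ (A θ)ᶜ = 0 := (hAC θ) h0
        rw [hxv'def]; dsimp only
        rw [if_pos h0, h0, hb0]
        simp
      · have ha : (Q (A θ)ᶜ).toReal ≠ 0 :=
          ENNReal.toReal_ne_zero.mpr ⟨h0, measure_ne_top _ _⟩
        rw [hxv'def]; dsimp only
        rw [if_neg h0]
        field_simp
    -- sums of weights
    have hQA : ∑ θ, Q (A θ) = 1 := by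
      have h := sum_measure_preimage_singleton (μ := Q) (Finset.univ : Finset F)
        (f := T) (fun θ _ => hTmeasur θ)
      simp at h; exact h
    have hsa : ∑ θ, (Q (A θ)).toReal = 1 := by
      rw [← ENNReal.toReal_sum (fun θ _ => measure_ne_top _ _), hQA, ENNReal.toReal_one]
    have hsa' : ∑ θ, (Q (A θ)ᶜ).toReal = (Fintype.card F : ℝ) - 1 := by
      rw [Finset.sum_congr rfl (fun θ _ => hQcompl (A θ) (hAmeas θ)),
        Finset.sum_sub_distrib, hsa]
      simp [Finset.card_univ]
    set u : ℝ := ∑ θ, (P θ (A θ)ᶜ).toReal with hudef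
    have hus : u = (Fintype.card F : ℝ) - s := by
      rw [hudef, Finset.sum_congr rfl (fun θ _ => hcompl θ (A θ) (hAmeas θ)),
        Finset.sum_sub_distrib, ← hsdef]
      simp [Finset.card_univ]
    -- Jensen on the diagonal cells
    have hJ1 : f s ≤ ∑ θ, (Q (A θ)).toReal * f (xv θ) := by
      have h := hf.map_sum_le (t := Finset.univ) (w := fun θ => (Q (A θ)).toReal)
        (p := xv) (fun θ _ => ENNReal.toReal_nonneg) hsa (fun θ _ => hxv0 θ)
      simp only [smul_eq_mul] at h
      have h2 : ∑ θ, (Q (A θ)).toReal * xv θ = s := by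
        rw [Finset.sum_congr rfl (fun θ _ => haxv θ), ← hsdef]
      rwa [h2] at h
    -- Jensen on the off-diagonal cells
    have hJ2 : ((Fintype.card F : ℝ) - 1) * f (u / ((Fintype.card F : ℝ) - 1)) ≤
        ∑ θ, (Q (A θ)ᶜ).toReal * f (xv' θ) := by
      have hc := hn1pos
      have hwsum : ∑ θ, (Q (A θ)ᶜ).toReal / ((Fintype.card F : ℝ) - 1) = 1 := by
        rw [← Finset.sum_div, hsa', div_self hc.ne']
      have h := hf.map_sum_le (t := Finset.univ)
        (w := fun θ => (Q (A θ)ᶜ).toReal / ((Fintype.card F : ℝ) - 1))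
        (p := xv') (fun θ _ => div_nonneg ENNReal.toReal_nonneg hc.le) hwsum
        (fun θ _ => hxv'0 θ)
      simp only [smul_eq_mul] at h
      have h2 : ∑ θ, (Q (A θ)ᶜ).toReal / ((Fintype.card F : ℝ) - 1) * xv' θ
          = u / ((Fintype.card F : ℝ) - 1) := by
        rw [Finset.sum_congr rfl
          (fun θ _ => by rw [div_mul_eq_mul_div, haxv' θ]), ← Finset.sum_div, ← hudef]
      have h3 : ∑ θ, (Q (A θ)ᶜ).toReal / ((Fintype.card F : ℝ) - 1) * f (xv' θ)
          = (∑ θ, (Q (A θ)ᶜ).toReal * f (xv' θ)) / ((Fintype.card F : ℝ) - 1) := by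
        rw [Finset.sum_congr rfl
          (fun θ _ => by rw [div_mul_eq_mul_div]), ← Finset.sum_div]
      rw [h2, h3] at h
      calc ((Fintype.card F : ℝ) - 1) * f (u / ((Fintype.card F : ℝ) - 1))
          ≤ ((Fintype.card F : ℝ) - 1) *
            ((∑ θ, (Q (A θ)ᶜ).toReal * f (xv' θ)) / ((Fintype.card F : ℝ) - 1)) :=
            mul_le_mul_of_nonneg_left h hc.le
      _ = ∑ θ, (Q (A θ)ᶜ).toReal * f (xv' θ) := by field_simp
    -- per-θ split of the divergence
    have hsplit : ∀ θ, (Q (A θ)).toReal * f (xv θ) + (Q (A θ)ᶜ).toReal * f (xv' θ)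
        ≤ fDivR f (P θ) Q := by
      intro θ
      have hc1 : (Q (A θ)).toReal * f (xv θ) ≤ ∫ x in A θ, f (ρ θ x) ∂Q :=
        hcell θ (A θ) (hAmeas θ)
      have hc2 : (Q (A θ)ᶜ).toReal * f (xv' θ) ≤ ∫ x in (A θ)ᶜ, f (ρ θ x) ∂Q :=
        hcell θ (A θ)ᶜ (hAmeas θ).compl
      have hadd := integral_add_compl (hAmeas θ) (hfρint θ)
      rw [hDiv θ, ← hadd]
      exact add_le_add hc1 hc2
    -- assemble
    have hkey2' : N * bayesRisk P = u := by rw [hkey2, hus, hN]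
    have hNm1 : N - 1 = (Fintype.card F : ℝ) - 1 := by rw [hN]
    calc f (N * (1 - bayesRisk P)) + (N - 1) * f (N * bayesRisk P / (N - 1))
        = f s + ((Fintype.card F : ℝ) - 1) *
            f (u / ((Fintype.card F : ℝ) - 1)) := by rw [hkey1, hkey2', hNm1]
    _ ≤ ∑ θ, ((Q (A θ)).toReal * f (xv θ) + (Q (A θ)ᶜ).toReal * f (xv' θ)) := by
        rw [Finset.sum_add_distrib]
        exact add_le_add hJ1 hJ2
    _ ≤ ∑ θ, fDivR f (P θ) Q := Finset.sum_le_sum (fun θ _ => hsplit θ)
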